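/- arXiv:2602.06080 — 2 statements merged into one kernel-verified Lean document; each statement's English description precedes it below -/
import Mathlib

section
/- Let θ(t) := ∑_{n ∈ ℤ} e^{−πn²t} for t > 0, and define Φ⋆(x) := e^{−x/4} · (θ(e^x) − 1 − e^{−x/2}) for x ∈ ℝ. Then the function ℬ_LB Φ⋆(s) := ∫₀^∞ Φ⋆(x) e^{−sx} dx + ∫₀^∞ Φ⋆(x) e^{−(1/2 − s)x} dx is holomorphic (complex differentiable) on the open strip { s ∈ ℂ : −1/2 < Re(s) < 1/4 }. -/
open Real MeasureTheory

/-- The Jacobi theta function `θ(t) = ∑_{n ∈ ℤ} e^{−πn²t}`. -/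
noncomputable def jacobiThetaFn (t : ℝ) : ℝ := ∑' n : ℤ, Real.exp (-π * (n : ℝ) ^ 2 * t)

/-- The centered logarithmic kernel at the self-dual scale,
`Φ⋆(x) = e^{−x/4} (θ(e^x) − 1 − e^{−x/2})`. -/
noncomputable def PhiStar (x : ℝ) : ℝ :=
  Real.exp (-x / 4) * (jacobiThetaFn (Real.exp x) - 1 - Real.exp (-x / 2))

/-- The left-strip representation
`ℬ_LB Φ⋆(s) = ∫₀^∞ Φ⋆(x) e^{−sx} dx + ∫₀^∞ Φ⋆(x) e^{−(1/2−s)x} dx`. -/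
noncomputable def BLB (s : ℂ) : ℂ :=
  (∫ x in Set.Ioi (0 : ℝ), (PhiStar x : ℂ) * Complex.exp (-s * x))
    + ∫ x in Set.Ioi (0 : ℝ), (PhiStar x : ℂ) * Complex.exp (-(1 / 2 - s) * x)

open Complex in
lemma jacobiThetaFn_eq (t : ℝ) :
    (jacobiThetaFn t : ℂ) = jacobiTheta (t * I) := by
  rw [jacobiThetaFn, Complex.ofReal_tsum, jacobiTheta]
  congr 1
  funext n
  rw [Complex.ofReal_exp]
  congr 1
  have : (π : ℂ) * I * (n : ℂ) ^ 2 * (t * I) = (π * (n:ℝ)^2 * t : ℝ) * (I * I) := by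
    push_cast; ring
  rw [this, Complex.I_mul_I]
  push_cast; ring

lemma abs_jacobiThetaFn_sub_one_le {t : ℝ} (ht : 1 ≤ t) :
    |jacobiThetaFn t - 1| ≤ 2 / (1 - rexp (-π)) * rexp (-π * t) := by
  have ht0 : (0:ℝ) < t := lt_of_lt_of_le one_pos ht
  have him : (0:ℝ) < ((t : ℂ) * Complex.I).im := by simp [ht0]
  have h := norm_jacobiTheta_sub_one_le him
  have him' : ((t : ℂ) * Complex.I).im = t := by simp
  rw [him'] at h
  have h1 : |jacobiThetaFn t - 1| = ‖jacobiTheta ((t : ℂ) * Complex.I) - 1‖ := by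
    rw [← jacobiThetaFn_eq]
    rw [show ((jacobiThetaFn t : ℂ) - 1) = ((jacobiThetaFn t - 1 : ℝ) : ℂ) by push_cast; ring]
    rw [Complex.norm_real, Real.norm_eq_abs]
  rw [h1]
  refine h.trans ?_
  have hexp : rexp (-π * t) ≤ rexp (-π) := by
    apply Real.exp_le_exp.2
    nlinarith [Real.pi_pos]
  have hlt : rexp (-π) < 1 := by
    rw [Real.exp_lt_one_iff]; linarith [Real.pi_pos]
  gcongr

lemma continuousAt_jacobiThetaFn {t : ℝ} (ht : 0 < t) : ContinuousAt jacobiThetaFn t := by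
  have : ContinuousAt (fun u : ℝ => (jacobiTheta ((u : ℂ) * Complex.I)).re) t := by
    apply Complex.continuous_re.continuousAt.comp
    apply (continuousAt_jacobiTheta (by simp [ht])).comp
    fun_prop
  apply this.congr
  filter_upwards [isOpen_Ioi.mem_nhds ht] with u _
  rw [← jacobiThetaFn_eq]
  simp

lemma continuousAt_PhiStar (x : ℝ) : ContinuousAt PhiStar x := by
  unfold PhiStar
  apply ContinuousAt.mul
  · fun_prop
  · refine ContinuousAt.sub (ContinuousAt.sub ?_ continuousAt_const) (by fun_prop)
    exact (continuousAt_jacobiThetaFn (Real.exp_pos x)).comp (Real.continuous_exp.continuousAt)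

/-- The tail bound `|Φ⋆(x)| ≤ C e^{-3x/4}` for `x ≥ 0`. -/
lemma abs_PhiStar_le {x : ℝ} (hx : 0 ≤ x) :
    |PhiStar x| ≤ (2 / (1 - rexp (-π)) + 1) * rexp (-(3/4) * x) := by
  have hex : 1 ≤ rexp x := Real.one_le_exp hx
  have hth := abs_jacobiThetaFn_sub_one_le hex
  have hC : (0:ℝ) ≤ 2 / (1 - rexp (-π)) := by
    apply div_nonneg (by norm_num)
    have : rexp (-π) < 1 := by rw [Real.exp_lt_one_iff]; linarith [Real.pi_pos]
    linarith
  have step1 : |PhiStar x| ≤ rexp (-x/4) * (|jacobiThetaFn (rexp x) - 1| + rexp (-x/2)) := by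
    rw [PhiStar, abs_mul, abs_of_pos (Real.exp_pos _)]
    gcongr
    calc |jacobiThetaFn (rexp x) - 1 - rexp (-x/2)|
        ≤ |jacobiThetaFn (rexp x) - 1| + |rexp (-x/2)| := abs_sub _ _
      _ = |jacobiThetaFn (rexp x) - 1| + rexp (-x/2) := by
          rw [abs_of_pos (Real.exp_pos _)]
  have step2 : rexp (-π * rexp x) ≤ rexp (-x/2) := by
    apply Real.exp_le_exp.2
    have h1 : x + 1 ≤ rexp x := Real.add_one_le_exp x
    nlinarith [Real.pi_gt_three, Real.exp_pos x]
  calc |PhiStar x| ≤ rexp (-x/4) * (2 / (1 - rexp (-π)) * rexp (-x/2) + rexp (-x/2)) := by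
        refine step1.trans ?_
        gcongr
        exact hth.trans (mul_le_mul_of_nonneg_left step2 hC)
    _ = (2 / (1 - rexp (-π)) + 1) * (rexp (-x/4) * rexp (-x/2)) := by ring
    _ = (2 / (1 - rexp (-π)) + 1) * rexp (-(3/4) * x) := by
        rw [← Real.exp_add]; ring_nf

/-- The Mellin-side kernel: `Φ⋆(log t)` for `t > 1`, extended by `0`. -/
noncomputable def gKer : ℝ → ℂ :=
  Set.indicator (Set.Ioi 1) (fun t => (PhiStar (Real.log t) : ℂ))

lemma exp_image_Ioi : rexp '' Set.Ioi (0:ℝ) = Set.Ioi 1 := by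
  ext t
  constructor
  · rintro ⟨x, hx, rfl⟩
    have := Real.exp_lt_exp.mpr (hx : (0:ℝ) < x)
    rwa [Real.exp_zero] at this
  · intro ht
    exact ⟨Real.log t, Real.log_pos ht, Real.exp_log (lt_trans one_pos ht)⟩

lemma locInt_gKer : LocallyIntegrableOn gKer (Set.Ioi 0) := by
  rw [locallyIntegrableOn_iff isOpen_Ioi.isLocallyClosed]
  intro k hk hkc
  have hcont : ContinuousOn (fun t : ℝ => (PhiStar (Real.log t) : ℂ)) k := by
    intro t ht
    have h1 : ContinuousAt (fun t : ℝ => (PhiStar (Real.log t) : ℂ)) t := by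
      apply Complex.continuous_ofReal.continuousAt.comp
      exact (continuousAt_PhiStar _).comp (Real.continuousAt_log (ne_of_gt (hk ht)))
    exact h1.continuousWithinAt
  exact (hcont.integrableOn_compact hkc).indicator measurableSet_Ioi

lemma gKer_top : gKer =O[Filter.atTop] (fun t : ℝ => t ^ (-(3/4) : ℝ)) := by
  rw [Asymptotics.isBigO_iff]
  refine ⟨2 / (1 - rexp (-π)) + 1, ?_⟩
  filter_upwards [Filter.eventually_gt_atTop 1] with t ht
  have ht0 : (0:ℝ) < t := lt_trans one_pos ht
  rw [gKer, Set.indicator_of_mem (Set.mem_Ioi.mpr ht)]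
  have hlog : 0 ≤ Real.log t := Real.log_nonneg ht.le
  have h1 : ‖(↑(PhiStar (Real.log t)) : ℂ)‖ = |PhiStar (Real.log t)| := by
    rw [Complex.norm_real, Real.norm_eq_abs]
  rw [h1]
  have h2 : rexp (-(3/4) * Real.log t) = t ^ (-(3/4) : ℝ) := by
    rw [Real.rpow_def_of_pos ht0]; ring_nf
  have h3 : ‖t ^ (-(3/4) : ℝ)‖ = t ^ (-(3/4) : ℝ) := by
    rw [Real.norm_eq_abs, abs_of_nonneg (Real.rpow_nonneg ht0.le _)]
  rw [h3, ← h2]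
  exact abs_PhiStar_le hlog

lemma gKer_bot : gKer =O[nhdsWithin 0 (Set.Ioi 0)] (fun t : ℝ => t ^ (-(-1:ℝ) : ℝ)) := by
  rw [Asymptotics.isBigO_iff]
  refine ⟨1, ?_⟩
  have hmem : Set.Ioo (0:ℝ) 1 ∈ nhdsWithin 0 (Set.Ioi 0) :=
    Ioo_mem_nhdsGT_of_mem ⟨le_refl _, one_pos⟩
  filter_upwards [hmem] with t ht
  rw [gKer, Set.indicator_of_notMem (by simp [Set.mem_Ioi]; exact ht.2.le)]
  simp [norm_nonneg]

lemma mellin_gKer_eq (z : ℂ) :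
    mellin gKer z = ∫ x in Set.Ioi (0:ℝ), (PhiStar x : ℂ) * Complex.exp (z * x) := by
  rw [mellin]
  rw [setIntegral_eq_of_subset_of_forall_diff_eq_zero measurableSet_Ioi
    (Set.Ioi_subset_Ioi zero_le_one)
    (fun t ht => by rw [gKer, Set.indicator_of_notMem ht.2, smul_zero])]
  rw [← exp_image_Ioi,
    integral_image_eq_integral_abs_deriv_smul measurableSet_Ioi
      (fun x _ => (Real.hasDerivAt_exp x).hasDerivWithinAt) Real.exp_injective.injOn]
  apply setIntegral_congr_fun measurableSet_Ioi
  intro x hx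
  have hx1 : rexp x ∈ Set.Ioi (1:ℝ) := by
    rw [Set.mem_Ioi]
    have := Real.exp_lt_exp.mpr (hx : (0:ℝ) < x)
    rwa [Real.exp_zero] at this
  beta_reduce
  rw [gKer, Set.indicator_of_mem hx1, Real.log_exp]
  rw [abs_of_pos (Real.exp_pos x)]
  have hre : ((rexp x : ℝ) : ℂ) = Complex.exp x := (Complex.ofReal_exp x)
  rw [hre]
  have hcpow : Complex.exp (x : ℂ) ^ (z - 1) = Complex.exp ((x : ℂ) * (z - 1)) := by
    rw [Complex.cpow_def_of_ne_zero (Complex.exp_ne_zero _), Complex.log_exp]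
    · simp [Real.pi_pos]
    · simp [Real.pi_pos.le]
  rw [hcpow, smul_eq_mul, Complex.real_smul, hre]
  rw [show Complex.exp ↑x * (Complex.exp (↑x * (z - 1)) * ↑(PhiStar x)) =
      (PhiStar x : ℂ) * (Complex.exp ↑x * Complex.exp (↑x * (z - 1))) from by ring,
    ← Complex.exp_add]
  congr 2
  ring

lemma mellin_gKer_diff {z : ℂ} (h1 : -1 < z.re) (h2 : z.re < 3/4) :
    DifferentiableAt ℂ (mellin gKer) z :=
  mellin_differentiableAt_of_isBigO_rpow (a := 3/4) (b := -1)
    locInt_gKer gKer_top h2 gKer_bot h1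

/-- `ℬ_LB Φ⋆` is holomorphic on the open strip `−1/2 < Re s < 1/4`. -/
theorem BLB_holomorphic :
    DifferentiableOn ℂ BLB {s : ℂ | -1 / 2 < s.re ∧ s.re < 1 / 4} := by
  have hBLB : BLB = fun s => mellin gKer (-s) + mellin gKer (s - 1/2) := by
    funext s
    rw [BLB, mellin_gKer_eq, mellin_gKer_eq]
    congr 1
    simp only [neg_sub]
  rw [hBLB]
  intro s hs
  obtain ⟨h1, h2⟩ := hs
  apply DifferentiableAt.differentiableWithinAt
  apply DifferentiableAt.add
  · have hd : DifferentiableAt ℂ (mellin gKer) (-s) := by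
      apply mellin_gKer_diff <;> simp [Complex.neg_re] <;> linarith
    exact hd.comp s differentiable_neg.differentiableAt
  · have hd : DifferentiableAt ℂ (mellin gKer) (s - 1/2) := by
      apply mellin_gKer_diff <;> rw [Complex.sub_re] <;> norm_num <;> linarith
    exact hd.comp (f := fun s : ℂ => s - 1/2) s ((differentiable_id.sub_const (1/2 : ℂ)).differentiableAt)
end

section
/- Let α be a nonnegative integer, β an integer, and σ ∈ ℝ, and define Θ_{α,β}(t) := ∑_{n=1}^{∞} n^α t^{β/2} e^{−πn²t} for t > 0. If σ + β/2 − (α+1)/2 > 0, then the function t ↦ Θ_{α,β}(t) · t^{σ−1} is (absolutely) integrable on (0, ∞). -/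
open Real MeasureTheory

/-- If each `f i` is integrable, a.e. nonnegative, and the integrals are summable,
then the pointwise `tsum` is integrable. -/
lemma integrable_tsum_of_nonneg' {f : ℕ → ℝ → ℝ} {μ : Measure ℝ}
    (hf : ∀ i, Integrable (f i) μ) (h0 : ∀ i, 0 ≤ᵐ[μ] f i)
    (hsum : Summable fun i => ∫ x, f i x ∂μ) :
    Integrable (fun x => ∑' i, f i x) μ := by
  have h0' : ∀ᵐ x ∂μ, ∀ i, 0 ≤ f i x := (ae_all_iff).mpr h0
  let F : ℝ → NNReal := fun x => ∑' i, ‖f i x‖₊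
  have hcoe : ∀ᵐ x ∂μ, (∑' i, f i x) = (F x : ℝ) := by
    filter_upwards [h0'] with x hx
    rw [show (F x : ℝ) = ∑' i, (‖f i x‖₊ : ℝ) from NNReal.coe_tsum]
    exact tsum_congr fun i => by
      rw [coe_nnnorm, Real.norm_of_nonneg (hx i)]
  have hmeas : AEStronglyMeasurable (fun x => ∑' i, f i x) μ := by
    have h1 : AEMeasurable F μ :=
      AEMeasurable.nnreal_tsum fun i => (hf i).1.nnnorm.aemeasurable
    exact (h1.coe_nnreal_real.aestronglyMeasurable).congr
      (hcoe.mono fun x hx => hx.symm)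
  refine ⟨hmeas, ?_⟩
  have hpt : ∀ᵐ x ∂μ, (‖∑' i, f i x‖₊ : ENNReal) ≤ ∑' i, (‖f i x‖₊ : ENNReal) := by
    filter_upwards [h0'] with x hx
    by_cases hsx : Summable fun i => f i x
    · have h1 : (‖∑' i, f i x‖₊ : ENNReal) = ENNReal.ofReal (∑' i, f i x) := by
        rw [← enorm_eq_nnnorm, ← ofReal_norm,
          Real.norm_of_nonneg (tsum_nonneg fun i => hx i)]
      rw [h1, ENNReal.ofReal_tsum_of_nonneg hx hsx]
      exact le_of_eq (tsum_congr fun i => by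
        rw [← enorm_eq_nnnorm, ← ofReal_norm, Real.norm_of_nonneg (hx i)])
    · rw [tsum_eq_zero_of_not_summable hsx]
      simp
  have key : ∫⁻ x, (‖∑' i, f i x‖₊ : ENNReal) ∂μ < ⊤ :=
    calc ∫⁻ x, (‖∑' i, f i x‖₊ : ENNReal) ∂μ
        ≤ ∫⁻ x, ∑' i, (‖f i x‖₊ : ENNReal) ∂μ := lintegral_mono_ae hpt
      _ = ∑' i, ∫⁻ x, (‖f i x‖₊ : ENNReal) ∂μ :=
          lintegral_tsum fun i => (hf i).1.enorm
      _ = ∑' i, ENNReal.ofReal (∫ x, f i x ∂μ) := by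
          refine tsum_congr fun i => ?_
          rw [ofReal_integral_eq_lintegral_ofReal (hf i) (h0 i)]
          refine lintegral_congr_ae ?_
          filter_upwards [h0 i] with x hx
          rw [← enorm_eq_nnnorm, ← ofReal_norm, Real.norm_of_nonneg hx]
      _ = ENNReal.ofReal (∑' i, ∫ x, f i x ∂μ) := by
          rw [ENNReal.ofReal_tsum_of_nonneg
            (fun i => integral_nonneg_of_ae (h0 i)) hsum]
      _ < ⊤ := ENNReal.ofReal_lt_top
  exact key

/-- Mellin integrability of the monomial theta-series
`Θ_{α,β}(t) = ∑_{n≥1} n^α t^{β/2} e^{−πn²t}`: if `σ + β/2 − (α+1)/2 > 0`, then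
`t ↦ Θ_{α,β}(t) t^{σ−1}` is integrable on `(0, ∞)`. -/
theorem monomial_theta_mellin_integrable (α : ℕ) (β : ℤ) (σ : ℝ)
    (h : σ + (β : ℝ) / 2 - ((α : ℝ) + 1) / 2 > 0) :
    IntegrableOn
      (fun t : ℝ =>
        (∑' n : ℕ, ((n : ℝ) + 1) ^ α * t ^ ((β : ℝ) / 2)
            * Real.exp (-π * ((n : ℝ) + 1) ^ 2 * t)) * t ^ (σ - 1))
      (Set.Ioi 0) := by
  set s : ℝ := σ + (β : ℝ) / 2 with hs_def
  clear_value s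
  have hα0 : (0 : ℝ) ≤ (α : ℝ) := Nat.cast_nonneg α
  have hs0 : 0 < s := by linarith
  set g : ℕ → ℝ → ℝ := fun n t =>
    (((n : ℝ) + 1) ^ α * Real.exp (-π * ((n : ℝ) + 1) ^ 2 * t)) * t ^ (s - 1)
    with hg_def
  have hk : ∀ n : ℕ, (0 : ℝ) < (n : ℝ) + 1 := fun n => by positivity
  have hpi := Real.pi_pos
  have hcn : ∀ n : ℕ, (0 : ℝ) < π * ((n : ℝ) + 1) ^ 2 := fun n => by positivity
  -- each term is integrable on (0, ∞)
  have hgint : ∀ n, IntegrableOn (g n) (Set.Ioi 0) := by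
    intro n
    have h1 := integrableOn_rpow_mul_exp_neg_mul_rpow
      (by linarith : (-1 : ℝ) < s - 1) zero_lt_one (hcn n)
    simp only [Real.rpow_one] at h1
    have h2 : IntegrableOn
        (fun t : ℝ => ((n : ℝ) + 1) ^ α *
          (t ^ (s - 1) * Real.exp (-(π * ((n : ℝ) + 1) ^ 2) * t))) (Set.Ioi 0) :=
      h1.const_mul (((n : ℝ) + 1) ^ α)
    refine h2.congr_fun (fun t ht => ?_) measurableSet_Ioi
    have harg : -(π * ((n : ℝ) + 1) ^ 2) * t = -π * ((n : ℝ) + 1) ^ 2 * t := by ring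
    simp only [hg_def, harg]
    ring
  -- nonnegativity a.e. on (0, ∞)
  have hg0 : ∀ n, 0 ≤ᵐ[volume.restrict (Set.Ioi 0)] g n := by
    intro n
    rw [Filter.EventuallyLE, ae_restrict_iff' measurableSet_Ioi]
    refine Filter.Eventually.of_forall fun t ht => ?_
    have ht' : (0 : ℝ) < t := ht
    have h1 : (0 : ℝ) ≤ t ^ (s - 1) := Real.rpow_nonneg ht'.le _
    simp only [Pi.zero_apply, hg_def]
    exact mul_nonneg (by positivity) h1
  -- value of each integral
  have hgval : ∀ n, ∫ t in Set.Ioi 0, g n t =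
      ((n : ℝ) + 1) ^ α * ((1 / (π * ((n : ℝ) + 1) ^ 2)) ^ s * Real.Gamma s) := by
    intro n
    have hcongr : ∫ t in Set.Ioi 0, g n t = ∫ t in Set.Ioi 0,
        ((n : ℝ) + 1) ^ α * (t ^ (s - 1) * Real.exp (-(π * ((n : ℝ) + 1) ^ 2 * t))) := by
      refine setIntegral_congr_fun measurableSet_Ioi fun t ht => ?_
      have harg : -π * ((n : ℝ) + 1) ^ 2 * t = -(π * ((n : ℝ) + 1) ^ 2 * t) := by ring
      simp only [hg_def, harg]
      ring
    rw [hcongr, integral_const_mul,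
      Real.integral_rpow_mul_exp_neg_mul_Ioi hs0 (hcn n)]
  -- summability of the integrals
  have hlt : (α : ℝ) - 2 * s < -1 := by linarith
  have key : Summable (fun n : ℕ => ((n : ℝ) + 1) ^ ((α : ℝ) - 2 * s)) := by
    have h1 : Summable (fun n : ℕ => (n : ℝ) ^ ((α : ℝ) - 2 * s)) :=
      Real.summable_nat_rpow.mpr hlt
    have h2 := h1.comp_injective (add_left_injective 1)
    refine h2.congr fun n => ?_
    simp only [Function.comp_apply, Nat.cast_add, Nat.cast_one]
  have hsummable : Summable (fun n : ℕ => ∫ t in Set.Ioi 0, g n t) := by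
    have h2 := key.mul_left ((1 / π) ^ s * Real.Gamma s)
    refine h2.congr fun n => ?_
    have hkn := hk n
    rw [hgval n]
    have e1 : (1 / (π * ((n : ℝ) + 1) ^ 2)) ^ s
        = (1 / π) ^ s * ((((n : ℝ) + 1) ^ 2 : ℝ)) ^ (-s) := by
      rw [Real.div_rpow zero_le_one (by positivity), Real.one_rpow,
        Real.mul_rpow hpi.le (by positivity), Real.rpow_neg (by positivity),
        Real.div_rpow zero_le_one hpi.le, Real.one_rpow, one_div, mul_inv, one_div]
    have e2 : ((((n : ℝ) + 1) ^ 2 : ℝ)) ^ (-s) = ((n : ℝ) + 1) ^ (-(2 * s)) := by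
      rw [← Real.rpow_natCast ((n : ℝ) + 1) 2, ← Real.rpow_mul hkn.le]
      norm_num [mul_comm]
    have e3 : ((((n : ℝ) + 1) ^ α : ℝ)) = ((n : ℝ) + 1) ^ ((α : ℝ)) := by
      rw [Real.rpow_natCast]
    rw [e1, e2, e3,
      show (α : ℝ) - 2 * s = (α : ℝ) + -(2 * s) by ring,
      Real.rpow_add hkn]
    ring
  -- conclude
  have hmain : IntegrableOn (fun t => ∑' n, g n t) (Set.Ioi 0) :=
    integrable_tsum_of_nonneg' hgint hg0 hsummable
  refine hmain.congr_fun (fun t ht => ?_) measurableSet_Ioi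
  have ht' : (0 : ℝ) < t := ht
  rw [← tsum_mul_right]
  refine tsum_congr fun n => ?_
  simp only [hg_def]
  rw [show s - 1 = (β : ℝ) / 2 + (σ - 1) by rw [hs_def]; ring,
    Real.rpow_add ht']
  ring
end
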